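/- Let a : R^d → [0,∞) be integrable with finite second moment, Ω ⊂ R^d open and bounded, u ∈ C¹(R^d) with bounded and uniformly continuous gradient. Then lim_{ε→0} ∫_Ω ∫_{{ξ : x+εξ ∈ Ω}} a(ξ) ((u(x+εξ)-u(x))/ε)² dξ dx = ∫_Ω ∫_{R^d} a(ξ) ⟨∇u(x), ξ⟩² dξ dx. -/

import Mathlib

set_option maxHeartbeats 1000000


open MeasureTheory Filter
open scoped RealInnerProductSpace Topology

section aux

variable {d : ℕ}

lemma grad_inner_eq (u : EuclideanSpace ℝ (Fin d) → ℝ) (x ξ : EuclideanSpace ℝ (Fin d)) :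
    ⟪gradient u x, ξ⟫ = fderiv ℝ u x ξ := by
  simp [gradient, InnerProductSpace.toDual_symm_apply]

lemma grad_norm_eq (u : EuclideanSpace ℝ (Fin d) → ℝ) (x : EuclideanSpace ℝ (Fin d)) :
    ‖gradient u x‖ = ‖fderiv ℝ u x‖ := by
  simp [gradient]

lemma lip_of_grad_bdd {u : EuclideanSpace ℝ (Fin d) → ℝ} (hu : ContDiff ℝ 1 u)
    {M : ℝ} (hM : ∀ x, ‖gradient u x‖ ≤ M) (y z : EuclideanSpace ℝ (Fin d)) :
    ‖u y - u z‖ ≤ M * ‖y - z‖ := by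
  refine Convex.norm_image_sub_le_of_norm_fderiv_le
    (fun x _ => (hu.differentiable one_ne_zero).differentiableAt) ?_ convex_univ
    (Set.mem_univ z) (Set.mem_univ y)
  intro x _
  rw [← grad_norm_eq]
  exact hM x

end aux

/-- convergence of the scaled convolution energies on a solid domain:
for `u ∈ C¹` with bounded, uniformly continuous gradient,
`∫_Ω ∫_{{ξ : x+εξ ∈ Ω}} a(ξ)((u(x+εξ)-u(x))/ε)² → ∫_Ω ∫ a(ξ)⟨∇u(x),ξ⟩²` as `ε → 0⁺`. -/
theorem energy_limit_C1 {d : ℕ} (a : EuclideanSpace ℝ (Fin d) → ℝ)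
    (ha : Measurable a) (hnn : ∀ ξ, 0 ≤ a ξ) (hint : Integrable a)
    (hmom : Integrable (fun ξ => a ξ * ‖ξ‖ ^ 2))
    (Ω : Set (EuclideanSpace ℝ (Fin d))) (hΩ : IsOpen Ω)
    (hbdd : Bornology.IsBounded Ω)
    (u : EuclideanSpace ℝ (Fin d) → ℝ) (hu : ContDiff ℝ 1 u)
    (hgradbdd : ∃ M : ℝ, ∀ x, ‖gradient u x‖ ≤ M)
    (hgraduc : UniformContinuous (gradient u)) :
    Tendsto (fun ε : ℝ =>
        ∫ x in Ω, ∫ ξ in {ξ | x + ε • ξ ∈ Ω},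
          a ξ * ((u (x + ε • ξ) - u x) / ε) ^ 2)
      (𝓝[>] 0)
      (𝓝 (∫ x in Ω, ∫ ξ : EuclideanSpace ℝ (Fin d),
        a ξ * ⟪gradient u x, ξ⟫ ^ 2)) := by
  obtain ⟨M, hM⟩ := hgradbdd
  have hM0 : 0 ≤ M := le_trans (norm_nonneg _) (hM 0)
  have hucont : Continuous u := hu.continuous
  -- the pointwise bound
  have key_bound : ∀ (ε : ℝ), 0 < ε → ∀ x ξ : EuclideanSpace ℝ (Fin d),
      |a ξ * ((u (x + ε • ξ) - u x) / ε) ^ 2| ≤ M ^ 2 * (a ξ * ‖ξ‖ ^ 2) := by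
    intro ε hε x ξ
    have hq : |(u (x + ε • ξ) - u x) / ε| ≤ M * ‖ξ‖ := by
      rw [abs_div, abs_of_pos hε]
      rw [div_le_iff₀ hε]
      have := lip_of_grad_bdd hu hM (x + ε • ξ) x
      simp only [add_sub_cancel_left, norm_smul, Real.norm_eq_abs, abs_of_pos hε] at this
      calc |u (x + ε • ξ) - u x| ≤ M * (ε * ‖ξ‖) := this
        _ = M * ‖ξ‖ * ε := by ring
    have hq2 : ((u (x + ε • ξ) - u x) / ε) ^ 2 ≤ (M * ‖ξ‖) ^ 2 := by
      rw [← sq_abs]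
      exact pow_le_pow_left₀ (abs_nonneg _) hq 2
    rw [abs_of_nonneg (mul_nonneg (hnn ξ) (sq_nonneg _))]
    calc a ξ * ((u (x + ε • ξ) - u x) / ε) ^ 2 ≤ a ξ * (M * ‖ξ‖) ^ 2 :=
          mul_le_mul_of_nonneg_left hq2 (hnn ξ)
      _ = M ^ 2 * (a ξ * ‖ξ‖ ^ 2) := by ring
  have hbound_int : Integrable (fun ξ => M ^ 2 * (a ξ * ‖ξ‖ ^ 2)) := hmom.const_mul _
  -- measurability of set {ξ | x + ε•ξ ∈ Ω}
  have hset : ∀ (ε : ℝ) (x : EuclideanSpace ℝ (Fin d)),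
      MeasurableSet {ξ : EuclideanSpace ℝ (Fin d) | x + ε • ξ ∈ Ω} := by
    intro ε x
    exact (hΩ.preimage (continuous_const.add (continuous_const_smul ε))).measurableSet
  -- inner integrand as indicator
  set G : ℝ → EuclideanSpace ℝ (Fin d) → EuclideanSpace ℝ (Fin d) → ℝ := fun ε x ξ =>
    Set.indicator {ξ : EuclideanSpace ℝ (Fin d) | x + ε • ξ ∈ Ω}
      (fun ξ => a ξ * ((u (x + ε • ξ) - u x) / ε) ^ 2) ξ with hG
  have hinner_eq : ∀ (ε : ℝ) (x : EuclideanSpace ℝ (Fin d)),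
      (∫ ξ in {ξ | x + ε • ξ ∈ Ω}, a ξ * ((u (x + ε • ξ) - u x) / ε) ^ 2)
        = ∫ ξ, G ε x ξ := by
    intro ε x
    rw [hG, integral_indicator (hset ε x)]
  -- inner convergence for each x ∈ Ω
  have hinner : ∀ x ∈ Ω,
      Tendsto (fun ε : ℝ => ∫ ξ, G ε x ξ) (𝓝[>] 0)
        (𝓝 (∫ ξ : EuclideanSpace ℝ (Fin d), a ξ * ⟪gradient u x, ξ⟫ ^ 2)) := by
    intro x hx
    apply tendsto_integral_filter_of_dominated_convergence
      (fun ξ => M ^ 2 * (a ξ * ‖ξ‖ ^ 2))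
    · filter_upwards with ε
      refine ((Measurable.indicator ?_ (hset ε x)).aestronglyMeasurable)
      have hc : Continuous fun ξ : EuclideanSpace ℝ (Fin d) => u (x + ε • ξ) :=
        hucont.comp (continuous_const.add (continuous_const_smul ε))
      exact ha.mul ((((hc.sub continuous_const).div_const ε).pow 2).measurable)
    · filter_upwards [self_mem_nhdsWithin] with ε (hε : (0:ℝ) < ε)
      filter_upwards with ξ
      refine le_trans (norm_indicator_le_norm_self _ _) ?_
      exact key_bound ε hε x ξ
    · exact hbound_int
    · filter_upwards with ξ
      -- eventually the set membership holds
      have hev : ∀ᶠ ε : ℝ in 𝓝[>] 0, x + ε • ξ ∈ Ω := by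
        apply eventually_nhdsWithin_of_eventually_nhds
        have hc : Continuous (fun ε : ℝ => x + ε • ξ) := by continuity
        have : Tendsto (fun ε : ℝ => x + ε • ξ) (𝓝 0) (𝓝 x) := by
          have := hc.tendsto 0
          simpa using this
        exact this.eventually (hΩ.mem_nhds hx)
      -- difference quotient tendsto
      have hderiv : HasDerivAt (fun t : ℝ => u (x + t • ξ)) (fderiv ℝ u x ξ) 0 := by
        have hg : HasDerivAt (fun t : ℝ => x + t • ξ) ξ 0 := by
          simpa using ((hasDerivAt_id (0:ℝ)).smul_const ξ).const_add x
        have hf : HasFDerivAt u (fderiv ℝ u x) (x + (0:ℝ) • ξ) := by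
          simpa using ((hu.differentiable one_ne_zero) x).hasFDerivAt
        exact hf.comp_hasDerivAt 0 hg
      have hslope : Tendsto (fun ε : ℝ => (u (x + ε • ξ) - u x) / ε) (𝓝[>] 0)
          (𝓝 (fderiv ℝ u x ξ)) := by
        have := hasDerivAt_iff_tendsto_slope.mp hderiv
        have h2 : Tendsto (slope (fun t : ℝ => u (x + t • ξ)) 0) (𝓝[>] 0)
            (𝓝 (fderiv ℝ u x ξ)) :=
          this.mono_left (nhdsWithin_mono 0 (fun t ht => ne_of_gt ht))
        refine h2.congr (fun ε => ?_)
        rw [slope_def_field]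
        simp [div_eq_inv_mul]
      have hlim : Tendsto (fun ε : ℝ => a ξ * ((u (x + ε • ξ) - u x) / ε) ^ 2) (𝓝[>] 0)
          (𝓝 (a ξ * ⟪gradient u x, ξ⟫ ^ 2)) := by
        rw [grad_inner_eq]
        exact ((hslope.pow 2).const_mul _)
      refine (hlim.congr' ?_)
      filter_upwards [hev] with ε hε
      rw [hG]
      exact (Set.indicator_of_mem (show ξ ∈ {ξ | x + ε • ξ ∈ Ω} from hε)
        (fun ξ => a ξ * ((u (x + ε • ξ) - u x) / ε) ^ 2)).symm
  -- outer DCT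
  set C : ℝ := ∫ ξ : EuclideanSpace ℝ (Fin d), M ^ 2 * (a ξ * ‖ξ‖ ^ 2) with hC
  have houter_meas : ∀ ε : ℝ,
      AEStronglyMeasurable (fun x => ∫ ξ, G ε x ξ) (volume.restrict Ω) := by
    intro ε
    have hjoint : StronglyMeasurable (fun p : EuclideanSpace ℝ (Fin d) × EuclideanSpace ℝ (Fin d) =>
        G ε p.1 p.2) := by
      apply Measurable.stronglyMeasurable
      have hSset : MeasurableSet {p : EuclideanSpace ℝ (Fin d) × EuclideanSpace ℝ (Fin d) |
          p.1 + ε • p.2 ∈ Ω} :=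
        (hΩ.preimage (continuous_fst.add (continuous_snd.const_smul ε))).measurableSet
      have hf : Measurable (fun p : EuclideanSpace ℝ (Fin d) × EuclideanSpace ℝ (Fin d) =>
          a p.2 * ((u (p.1 + ε • p.2) - u p.1) / ε) ^ 2) := by
        have hc : Continuous (fun p : EuclideanSpace ℝ (Fin d) × EuclideanSpace ℝ (Fin d) =>
            u (p.1 + ε • p.2)) :=
          hucont.comp (continuous_fst.add (continuous_snd.const_smul ε))
        exact (ha.comp measurable_snd).mul
          ((((hc.sub (hucont.comp continuous_fst)).div_const ε).pow 2).measurable)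
      have : (fun p : EuclideanSpace ℝ (Fin d) × EuclideanSpace ℝ (Fin d) => G ε p.1 p.2)
          = Set.indicator {p : EuclideanSpace ℝ (Fin d) × EuclideanSpace ℝ (Fin d) |
              p.1 + ε • p.2 ∈ Ω}
            (fun p => a p.2 * ((u (p.1 + ε • p.2) - u p.1) / ε) ^ 2) := by
        funext p
        rw [hG]
        beta_reduce
        by_cases hp : p.1 + ε • p.2 ∈ Ω
        · rw [Set.indicator_of_mem (show p.2 ∈ {ξ | p.1 + ε • ξ ∈ Ω} from hp)
              (fun ξ => a ξ * ((u (p.1 + ε • ξ) - u p.1) / ε) ^ 2),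
            Set.indicator_of_mem
              (show p ∈ {p : EuclideanSpace ℝ (Fin d) × EuclideanSpace ℝ (Fin d) |
                p.1 + ε • p.2 ∈ Ω} from hp)
              (fun p => a p.2 * ((u (p.1 + ε • p.2) - u p.1) / ε) ^ 2)]
        · rw [Set.indicator_of_notMem (show p.2 ∉ {ξ | p.1 + ε • ξ ∈ Ω} from hp)
              (fun ξ => a ξ * ((u (p.1 + ε • ξ) - u p.1) / ε) ^ 2),
            Set.indicator_of_notMem
              (show p ∉ {p : EuclideanSpace ℝ (Fin d) × EuclideanSpace ℝ (Fin d) |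
                p.1 + ε • p.2 ∈ Ω} from hp)
              (fun p => a p.2 * ((u (p.1 + ε • p.2) - u p.1) / ε) ^ 2)]
      rw [this]
      exact hf.indicator hSset
    exact (hjoint.integral_prod_right').aestronglyMeasurable.restrict
  have hΩfin : volume Ω < ⊤ := hbdd.measure_lt_top
  apply tendsto_integral_filter_of_dominated_convergence (fun _ => C)
  · filter_upwards with ε
    refine AEStronglyMeasurable.congr (houter_meas ε) ?_
    filter_upwards with x
    exact (hinner_eq ε x).symm
  · filter_upwards [self_mem_nhdsWithin] with ε (hε : (0:ℝ) < ε)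
    filter_upwards with x
    rw [hinner_eq ε x]
    refine norm_integral_le_of_norm_le hbound_int ?_
    filter_upwards with ξ
    exact le_trans (norm_indicator_le_norm_self _ _) (key_bound ε hε x ξ)
  · exact integrableOn_const hΩfin.ne
  · rw [ae_restrict_iff' hΩ.measurableSet]
    filter_upwards with x hx
    exact (hinner x hx).congr (fun ε => (hinner_eq ε x).symm)
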